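/- arXiv:2507.09384 — 5 statements merged into one kernel-verified Lean document; each statement's English description precedes it below -/
import Mathlib

section
/- Let a, b, c, η be real numbers with c > 0, η > 0, and define ψ(t) = a + b·t − c·|t| for t ∈ [−η, η]. Then ∫_{−η}^{η} ψ(t)² dt ≥ (1/6)·c²·η³. -/
lemma poly_int (a d p q : ℝ) :
    ∫ t in p..q, (a + d * t) ^ 2 =
      (a ^ 2 * q + a * d * q ^ 2 + d ^ 2 * q ^ 3 / 3)
        - (a ^ 2 * p + a * d * p ^ 2 + d ^ 2 * p ^ 3 / 3) := by
  apply intervalIntegral.integral_eq_sub_of_hasDerivAt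
  · intro x _
    have h := ((hasDerivAt_id x).const_mul (a ^ 2)).add
      (((hasDerivAt_pow 2 x).const_mul (a * d)).add
        ((hasDerivAt_pow 3 x).const_mul (d ^ 2 / 3)))
    convert h using 1
    · funext t; simp; ring
    · simp; ring
  · exact (Continuous.intervalIntegrable (by continuity) p q)

/-- `∫_{−η}^{η} (a + b t − c |t|)² dt ≥ (1/6) c² η³`. -/
theorem stmt_6 (a b c η : ℝ) (hc : 0 < c) (hη : 0 < η) :
    (1 / 6) * c ^ 2 * η ^ 3 ≤ ∫ t in (-η)..η, (a + b * t - c * |t|) ^ 2 := by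
  have hcont : Continuous fun t : ℝ => (a + b * t - c * |t|) ^ 2 := by continuity
  have hsplit :
      (∫ t in (-η)..(0:ℝ), (a + b * t - c * |t|) ^ 2)
        + ∫ t in (0:ℝ)..η, (a + b * t - c * |t|) ^ 2
      = ∫ t in (-η)..η, (a + b * t - c * |t|) ^ 2 :=
    intervalIntegral.integral_add_adjacent_intervals
      (hcont.intervalIntegrable _ _) (hcont.intervalIntegrable _ _)
  have h1 : (∫ t in (-η)..(0:ℝ), (a + b * t - c * |t|) ^ 2)
      = ∫ t in (-η)..(0:ℝ), (a + (b + c) * t) ^ 2 := by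
    apply intervalIntegral.integral_congr
    intro x hx
    rw [Set.uIcc_of_le (by linarith)] at hx
    show (a + b * x - c * |x|) ^ 2 = _
    rw [abs_of_nonpos hx.2]; ring
  have h2 : (∫ t in (0:ℝ)..η, (a + b * t - c * |t|) ^ 2)
      = ∫ t in (0:ℝ)..η, (a + (b - c) * t) ^ 2 := by
    apply intervalIntegral.integral_congr
    intro x hx
    rw [Set.uIcc_of_le (by linarith)] at hx
    show (a + b * x - c * |x|) ^ 2 = _
    rw [abs_of_nonneg hx.1]; ring
  rw [← hsplit, h1, h2, poly_int, poly_int]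
  nlinarith [mul_nonneg hη.le (sq_nonneg (2 * a - c * η)),
    mul_nonneg (mul_nonneg hη.le hη.le) (mul_nonneg hη.le (sq_nonneg b))]
end

section
/- Let n ∈ ℕ, c > 0, η > 0, and let f : ℝⁿ → ℝⁿ (with ℓ₂ norm on the target) be given by f(x) = c·(|x₁|,…,|x_n|). Let B = [−η,η]ⁿ and let g = (g₁,…,g_n) : B → ℝⁿ be continuous such that for each i and each fixed z ∈ [−η,η]ⁿ the function t ↦ ∂g_i/∂x_i(z₁,…,z_{i−1},t,z_{i+1},…,z_n) exists and is uniformly continuous on (−η,η) with common modulus ω. If ω(η) ≤ c/2, then (1/λ(B))·∫_B ‖g(x)−f(x)‖² dλ(x) ≥ (1/12)·n·η²·(c−2ω(η))², and in particular sup_{x∈B} ‖g(x)−f(x)‖ ≥ (√3/6)·√n·η·(c−2ω(η)). -/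
open MeasureTheory Set

section Aux

private lemma wells_cube_line (a η : ℝ) (hη : 0 < η) (ha : 0 ≤ a) (m : ℝ) (hm : m ∈ Icc 0 η) :
    a^2 * η^3 / 12 ≤ ∫ t in (0:ℝ)..η, a^2 * (t - m)^2 := by
  have : ∫ t in (0:ℝ)..η, a^2 * (t - m)^2 = a^2 * (((η - m)^3 + m^3)/3) := by
    rw [intervalIntegral.integral_const_mul]
    have : ∫ t in (0:ℝ)..η, (t - m)^2 = ∫ t in (0-m)..(η-m), t^2 :=
      intervalIntegral.integral_comp_sub_right (fun t => t^2) m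
    rw [this, integral_pow]
    ring
  rw [this]
  have h1 : η^3/4 ≤ (η - m)^3 + m^3 := by
    nlinarith [hm.1, hm.2, sq_nonneg (m - η/2), sq_nonneg m, sq_nonneg (η - m)]
  nlinarith [sq_nonneg a]

private lemma wells_psi_bound (a η : ℝ) (hη : 0 < η) (ha : 0 ≤ a) (ψ : ℝ → ℝ)
    (hcont : ContinuousOn ψ (Icc 0 η))
    (hdec : ∀ s ∈ Icc (0:ℝ) η, ∀ t ∈ Icc (0:ℝ) η, s ≤ t → ψ t ≤ ψ s - a * (t - s)) :
    a^2 * η^3 / 12 ≤ ∫ t in (0:ℝ)..η, (ψ t)^2 := by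
  obtain ⟨m, hm, hpt⟩ : ∃ m ∈ Icc (0:ℝ) η, ∀ t ∈ Icc (0:ℝ) η, a^2 * (t - m)^2 ≤ (ψ t)^2 := by
    rcases le_or_gt 0 (ψ η) with hψη | hψη
    · refine ⟨η, ⟨hη.le, le_rfl⟩, fun t ht => ?_⟩
      have h := hdec t ht η ⟨hη.le, le_rfl⟩ ht.2
      have h2 : a * (η - t) ≤ ψ t := by linarith
      have h3 : 0 ≤ a * (η - t) := mul_nonneg ha (by linarith [ht.2])
      nlinarith
    rcases le_or_gt (ψ 0) 0 with hψ0 | hψ0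
    · refine ⟨0, ⟨le_rfl, hη.le⟩, fun t ht => ?_⟩
      have h := hdec 0 ⟨le_rfl, hη.le⟩ t ht ht.1
      have h2 : ψ t ≤ -(a * t) := by linarith
      have h3 : 0 ≤ a * t := mul_nonneg ha ht.1
      nlinarith
    · obtain ⟨m, hm, hψm⟩ := intermediate_value_Icc' hη.le hcont
        (show (0:ℝ) ∈ Icc (ψ η) (ψ 0) from ⟨hψη.le, hψ0.le⟩)
      refine ⟨m, hm, fun t ht => ?_⟩
      rcases le_or_gt t m with htm | htm
      · have h := hdec t ht m hm htm
        have h2 : a * (m - t) ≤ ψ t := by rw [hψm] at h; linarith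
        have h3 : 0 ≤ a * (m - t) := mul_nonneg ha (by linarith)
        nlinarith
      · have h := hdec m hm t ht htm.le
        have h2 : ψ t ≤ -(a * (t - m)) := by rw [hψm] at h; linarith
        have h3 : 0 ≤ a * (t - m) := mul_nonneg ha (by linarith)
        nlinarith
  refine le_trans (wells_cube_line a η hη ha m hm) ?_
  apply intervalIntegral.integral_mono_on hη.le
  · exact (Continuous.intervalIntegrable (by continuity) 0 η)
  · exact ContinuousOn.intervalIntegrable_of_Icc hη.le (hcont.pow 2)
  · exact hpt

private lemma wells_line_bound (c η ω0 : ℝ) (hη : 0 < η) (hω0 : 0 ≤ ω0) (hωc : ω0 ≤ c)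
    (G p : ℝ → ℝ) (hGcont : ContinuousOn G (Icc (-η) η))
    (hderiv : ∀ t ∈ Ioo (-η) η, HasDerivAt G (p t) t)
    (hp : ∀ t ∈ Ioo (-η) η, |p t - p 0| ≤ ω0) :
    (c - ω0)^2 * η^3 / 6 ≤ ∫ t in (-η)..η, (G t - c * |t|)^2 := by
  set a := c - ω0 with ha_def
  have ha : 0 ≤ a := by linarith
  set ψ : ℝ → ℝ := fun t => (G t + G (-t))/2 - c * t with hψ_def
  have hneg_maps : ∀ t ∈ Icc (0:ℝ) η, -t ∈ Icc (-η) η := fun t ht => ⟨by linarith [ht.2], by linarith [ht.1]⟩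
  have hin : Icc (0:ℝ) η ⊆ Icc (-η) η := fun t ht => ⟨by linarith [ht.1], ht.2⟩
  have hψcont : ContinuousOn ψ (Icc 0 η) := by
    apply ContinuousOn.sub
    · exact ((hGcont.mono hin).add ((hGcont.comp continuousOn_neg hneg_maps))).div_const 2
    · exact (continuous_const.mul continuous_id).continuousOn
  have hχanti : AntitoneOn (fun t => ψ t + a * t) (Icc 0 η) := by
    have hD : ∀ t ∈ Ioo (0:ℝ) η, HasDerivAt (fun t => ψ t + a * t) ((p t - p (-t))/2 - ω0) t := by
      intro t ht
      have ht1 : t ∈ Ioo (-η) η := ⟨by linarith [ht.1], ht.2⟩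
      have ht2 : -t ∈ Ioo (-η) η := ⟨by linarith [ht.2], by linarith [ht.1]⟩
      have h1 : HasDerivAt G (p t) t := hderiv t ht1
      have h2 : HasDerivAt (fun s => G (-s)) (p (-t) * (-1)) t :=
        (hderiv (-t) ht2).comp t (hasDerivAt_neg t)
      have hlc : HasDerivAt (fun s : ℝ => c * s) c t := by
        simpa using (hasDerivAt_id t).const_mul c
      have hla : HasDerivAt (fun s : ℝ => a * s) a t := by
        simpa using (hasDerivAt_id t).const_mul a
      have h3 : HasDerivAt ψ ((p t + p (-t) * (-1))/2 - c) t :=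
        ((h1.add h2).div_const 2).sub hlc
      have h4 := h3.add hla
      exact h4.congr_deriv (by rw [ha_def]; ring)
    apply antitoneOn_of_deriv_nonpos (convex_Icc 0 η)
    · exact hψcont.add (continuous_const.mul continuous_id).continuousOn
    · intro t ht
      rw [interior_Icc] at ht
      exact (hD t ht).differentiableAt.differentiableWithinAt
    · intro t ht
      rw [interior_Icc] at ht
      rw [(hD t ht).deriv]
      have ht1 : t ∈ Ioo (-η) η := ⟨by linarith [ht.1], ht.2⟩
      have ht2 : -t ∈ Ioo (-η) η := ⟨by linarith [ht.2], by linarith [ht.1]⟩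
      have e1 : p t - p 0 ≤ ω0 := (abs_le.mp (hp t ht1)).2
      have e2 : -(p (-t) - p 0) ≤ ω0 := by linarith [(abs_le.mp (hp (-t) ht2)).1]
      linarith
  have hdec : ∀ s ∈ Icc (0:ℝ) η, ∀ t ∈ Icc (0:ℝ) η, s ≤ t → ψ t ≤ ψ s - a * (t - s) := by
    intro s hs t ht hst
    have := hχanti hs ht hst
    simp only at this
    linarith
  have hmain := wells_psi_bound a η hη ha ψ hψcont hdec
  set φ : ℝ → ℝ := fun t => (G t - c * |t|)^2 with hφ_def
  have hφcont : ContinuousOn φ (Icc (-η) η) :=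
    ((hGcont.sub (continuous_const.mul continuous_abs).continuousOn).pow 2)
  have hint1 : IntervalIntegrable φ volume (-η) 0 :=
    (hφcont.mono (Icc_subset_Icc le_rfl hη.le)).intervalIntegrable_of_Icc (by linarith)
  have hint2 : IntervalIntegrable φ volume 0 η :=
    (hφcont.mono (Icc_subset_Icc (by linarith) le_rfl)).intervalIntegrable_of_Icc hη.le
  have hsplit : ∫ t in (-η)..η, φ t = (∫ t in (-η)..(0:ℝ), φ t) + ∫ t in (0:ℝ)..η, φ t :=
    (intervalIntegral.integral_add_adjacent_intervals hint1 hint2).symm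
  have hrefl : ∫ t in (-η)..(0:ℝ), φ t = ∫ t in (0:ℝ)..η, φ (-t) := by
    rw [intervalIntegral.integral_comp_neg φ]
    norm_num
  have hintneg : IntervalIntegrable (fun t => φ (-t)) volume 0 η := by
    apply ContinuousOn.intervalIntegrable_of_Icc hη.le
    exact hφcont.comp continuousOn_neg hneg_maps
  have hsum : ∫ t in (-η)..η, φ t = ∫ t in (0:ℝ)..η, (φ (-t) + φ t) := by
    rw [hsplit, hrefl, intervalIntegral.integral_add hintneg hint2]
  have hpt : ∀ t ∈ Icc (0:ℝ) η, 2 * (ψ t)^2 ≤ φ (-t) + φ t := by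
    intro t ht
    have habs : |t| = t := abs_of_nonneg ht.1
    have habs' : |(-t)| = t := by rw [abs_neg, habs]
    simp only [hφ_def, hψ_def, habs, habs']
    nlinarith [sq_nonneg (G t - G (-t))]
  have hmono : ∫ t in (0:ℝ)..η, 2 * (ψ t)^2 ≤ ∫ t in (0:ℝ)..η, (φ (-t) + φ t) := by
    apply intervalIntegral.integral_mono_on hη.le ?_ (hintneg.add hint2) hpt
    exact ContinuousOn.intervalIntegrable_of_Icc hη.le (continuousOn_const.mul (hψcont.pow 2))
  have h2ψ : ∫ t in (0:ℝ)..η, 2 * (ψ t)^2 = 2 * ∫ t in (0:ℝ)..η, (ψ t)^2 := by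
    rw [← intervalIntegral.integral_const_mul]
  rw [hsum]
  calc a^2 * η^3 / 6 = 2 * (a^2 * η^3 / 12) := by ring
    _ ≤ 2 * ∫ t in (0:ℝ)..η, (ψ t)^2 := by linarith
    _ = ∫ t in (0:ℝ)..η, 2 * (ψ t)^2 := h2ψ.symm
    _ ≤ _ := hmono

private lemma wells_coord_bound {m : ℕ} (i : Fin (m+1)) (η K : ℝ) (hη : 0 < η)
    (F : (Fin (m+1) → ℝ) → ℝ)
    (hFcont : ContinuousOn F (univ.pi fun _ => Icc (-η) η))
    (hline : ∀ y : Fin m → ℝ, (∀ j, y j ∈ Icc (-η) η) →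
      K ≤ ∫ t in (-η)..η, F (i.insertNth t y)) :
    (2*η)^m * K ≤ ∫ x in (univ.pi fun _ => Icc (-η) η), F x := by
  classical
  set cube : Set (Fin (m+1) → ℝ) := univ.pi fun _ => Icc (-η) η with hcube
  set u : Set (Fin m → ℝ) := univ.pi fun _ => Icc (-η) η with hu
  set s : Set ℝ := Icc (-η) η with hs
  set e := MeasurableEquiv.piFinSuccAbove (fun _ : Fin (m+1) => ℝ) i with he
  have MP : MeasurePreserving e.symm volume volume :=
    (volume_preserving_piFinSuccAbove (fun _ : Fin (m+1) => ℝ) i).symm e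
  have hesymm : ∀ z : ℝ × (Fin m → ℝ), e.symm z = i.insertNth z.1 z.2 := by
    intro z
    rw [MeasurableEquiv.piFinSuccAbove_symm_apply]
    rfl
  have hpre : e.symm ⁻¹' cube = s ×ˢ u := by
    ext z
    simp only [mem_preimage, hesymm, hcube, mem_pi, mem_univ, forall_true_left, true_implies,
      mem_prod]
    rw [Fin.forall_iff_succAbove i]
    simp [Fin.insertNth_apply_same, Fin.insertNth_apply_succAbove, hu, hs, Pi.le_def, forall_and]
  have hins_cont : Continuous (fun z : ℝ × (Fin m → ℝ) => (i.insertNth z.1 z.2 : Fin (m+1) → ℝ)) := by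
    apply continuous_pi
    intro j
    rcases eq_or_ne j i with rfl | hne
    · simpa only [Fin.insertNth_apply_same] using continuous_fst
    · obtain ⟨k, rfl⟩ := Fin.exists_succAbove_eq hne
      simpa only [Fin.insertNth_apply_succAbove] using (continuous_apply k).comp' continuous_snd
  have hmaps : MapsTo (fun z : ℝ × (Fin m → ℝ) => i.insertNth z.1 z.2) (s ×ˢ u) cube := by
    intro z hz
    simp only [hcube, mem_pi, mem_univ, true_implies]
    intro j
    rcases eq_or_ne j i with rfl | hne
    · rw [Fin.insertNth_apply_same]; exact hz.1
    · obtain ⟨k, rfl⟩ := Fin.exists_succAbove_eq hne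
      rw [Fin.insertNth_apply_succAbove]
      exact hz.2 k (mem_univ k)
  have hHcont : ContinuousOn (fun z : ℝ × (Fin m → ℝ) => F (i.insertNth z.1 z.2)) (s ×ˢ u) :=
    hFcont.comp hins_cont.continuousOn hmaps
  have hcomp : IsCompact (s ×ˢ u) :=
    isCompact_Icc.prod (isCompact_univ_pi fun _ => isCompact_Icc)
  have hInt : IntegrableOn (fun z : ℝ × (Fin m → ℝ) => F (i.insertNth z.1 z.2)) (s ×ˢ u)
      (volume : Measure (ℝ × (Fin m → ℝ))) := hHcont.integrableOn_compact hcomp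
  have step1 : ∫ x in cube, F x = ∫ z in s ×ˢ u, F (i.insertNth z.1 z.2) := by
    have := MP.setIntegral_preimage_emb e.symm.measurableEmbedding F cube
    rw [hpre] at this
    rw [← this]
    apply setIntegral_congr_fun hcomp.measurableSet
    intro z hz
    simp only [hesymm]
  have hInt' : Integrable (fun z : ℝ × (Fin m → ℝ) => F (i.insertNth z.1 z.2))
      ((volume.restrict s).prod (volume.restrict u)) := by
    rw [Measure.prod_restrict, ← Measure.volume_eq_prod]
    exact hInt
  have step2 : ∫ z in s ×ˢ u, F (i.insertNth z.1 z.2)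
      = ∫ y in u, ∫ t in s, F (i.insertNth t y) := by
    rw [Measure.volume_eq_prod, ← Measure.prod_restrict]
    exact integral_prod_symm _ hInt'
  have hinner : ∀ y ∈ u, K ≤ ∫ t in s, F (i.insertNth t y) := by
    intro y hy
    have := hline y (fun j => hy j (mem_univ j))
    rwa [intervalIntegral.integral_of_le (by linarith), ← integral_Icc_eq_integral_Ioc] at this
  have hIntInner : IntegrableOn (fun y => ∫ t in s, F (i.insertNth t y)) u volume :=
    hInt'.integral_prod_right
  have step3 : (volume u).toReal * K ≤ ∫ y in u, ∫ t in s, F (i.insertNth t y) := by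
    have := setIntegral_mono_on (integrableOn_const ((isCompact_univ_pi
      fun _ => isCompact_Icc).measure_lt_top.ne)) hIntInner
      ((isCompact_univ_pi fun _ => isCompact_Icc).measurableSet) hinner
    calc (volume u).toReal * K = ∫ _ in u, K := by rw [setIntegral_const, smul_eq_mul]; rfl
      _ ≤ _ := this
  have hvolu : (volume u).toReal = (2*η)^m := by
    rw [hu, show (volume : Measure (Fin m → ℝ)) = Measure.pi fun _ => volume from rfl,
      Measure.pi_pi]
    simp only [hs, Real.volume_Icc, Finset.prod_const, Finset.card_univ, Fintype.card_fin]
    rw [← ENNReal.ofReal_pow (by linarith), ENNReal.toReal_ofReal (pow_nonneg (by linarith) m)]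
    ring_nf
  rw [step1, step2]
  rw [hvolu] at step3
  exact step3

private lemma wells_cube_volume (k : ℕ) (η : ℝ) (hη : 0 < η) :
    (volume (univ.pi fun _ : Fin k => Icc (-η) η)).toReal = (2*η)^k := by
  rw [show (volume : Measure (Fin k → ℝ)) = Measure.pi fun _ => volume from rfl, Measure.pi_pi]
  simp only [Real.volume_Icc, Finset.prod_const, Finset.card_univ, Fintype.card_fin]
  rw [← ENNReal.ofReal_pow (by linarith), ENNReal.toReal_ofReal (pow_nonneg (by linarith) k)]
  ring_nf

end Aux

open MeasureTheory

/-- Quantitative lower bound (Wells): any map `g` on the cube `B = [−η,η]ⁿ` whose `i`-th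
component has a partial derivative in the `i`-th direction uniformly continuous with a common
modulus `ω` stays `L²`-far (and uniformly far) from `f(x) = c (|x₁|,…,|x_n|)`. -/
theorem stmt_8 (n : ℕ) (c η : ℝ) (hc : 0 < c) (hη : 0 < η)
    (ω : ℝ → ℝ) (hω_mono : ∀ s t : ℝ, 0 ≤ s → s ≤ t → ω s ≤ ω t) (hω0 : ω 0 = 0)
    (f : EuclideanSpace ℝ (Fin n) → EuclideanSpace ℝ (Fin n))
    (hf : ∀ x i, f x i = c * |x i|)
    (B : Set (EuclideanSpace ℝ (Fin n)))
    (hB : B = {x : EuclideanSpace ℝ (Fin n) | ∀ i, |x i| ≤ η})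
    (g : EuclideanSpace ℝ (Fin n) → EuclideanSpace ℝ (Fin n))
    (hg : ContinuousOn g B)
    (pd : Fin n → EuclideanSpace ℝ (Fin n) → ℝ)
    (hpd : ∀ i, ∀ z ∈ B, ∀ t ∈ Set.Ioo (-η) η,
      HasDerivAt (fun s => g (WithLp.toLp 2 (Function.update z i s)) i) (pd i (WithLp.toLp 2 (Function.update z i t))) t)
    (hmod : ∀ i, ∀ z ∈ B, ∀ s ∈ Set.Ioo (-η) η, ∀ t ∈ Set.Ioo (-η) η,
      |pd i (WithLp.toLp 2 (Function.update z i s)) - pd i (WithLp.toLp 2 (Function.update z i t))| ≤ ω |s - t|)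
    (hωη : ω η ≤ c / 2) :
    (1 / 12) * n * η ^ 2 * (c - 2 * ω η) ^ 2 ≤
        (1 / (volume B).toReal) * ∫ x in B, ‖g x - f x‖ ^ 2 ∧
      Real.sqrt 3 / 6 * Real.sqrt n * η * (c - 2 * ω η) ≤
        ⨆ x : B, ‖g (x : EuclideanSpace ℝ (Fin n)) - f (x : EuclideanSpace ℝ (Fin n))‖ := by
  classical
  have hωη0 : 0 ≤ ω η := hω0 ▸ hω_mono 0 η le_rfl hη.le
  have ha' : 0 ≤ c - 2 * ω η := by linarith
  set meq := (MeasurableEquiv.toLp 2 (Fin n → ℝ)).symm with hmeq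
  have hMP : MeasurePreserving ⇑meq volume volume :=
    EuclideanSpace.volume_preserving_symm_measurableEquiv_toLp (Fin n)
  set cube : Set (Fin n → ℝ) := Set.univ.pi fun _ => Set.Icc (-η) η with hcube
  have hBpre : B = ⇑meq ⁻¹' cube := by
    ext x
    simp only [hB, Set.mem_setOf_eq, Set.mem_preimage, hcube, Set.mem_pi, Set.mem_univ,
      true_implies, Set.mem_Icc]
    exact forall_congr' fun i => abs_le
  have hcubeM : MeasurableSet cube := MeasurableSet.univ_pi fun _ => measurableSet_Icc
  have hBmeas : MeasurableSet B := hBpre ▸ hcubeM.preimage meq.measurable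
  have hBvol : (volume B).toReal = (2*η)^n := by
    rw [hBpre, hMP.measure_preimage hcubeM.nullMeasurableSet]
    exact wells_cube_volume n η hη
  have hsymm_cont : Continuous ⇑meq.symm := by
    rw [hmeq, MeasurableEquiv.symm_symm, MeasurableEquiv.coe_toLp]
    exact PiLp.continuous_toLp 2 _
  have hBcompact : IsCompact B := by
    have himg : ⇑meq.symm '' cube = B := by
      rw [hBpre]
      ext x
      simp only [Set.mem_image, Set.mem_preimage]
      constructor
      · rintro ⟨y, hy, rfl⟩
        simpa [MeasurableEquiv.apply_symm_apply] using hy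
      · intro hx
        exact ⟨meq x, hx, meq.symm_apply_apply x⟩
    rw [← himg]
    exact (isCompact_univ_pi fun _ => isCompact_Icc).image_of_continuousOn
      hsymm_cont.continuousOn
  have hproj : ∀ i : Fin n, Continuous fun x : EuclideanSpace ℝ (Fin n) => x i :=
    fun i => (EuclideanSpace.proj (𝕜 := ℝ) i).continuous
  have hFicont : ∀ i : Fin n, ContinuousOn (fun x : EuclideanSpace ℝ (Fin n) =>
      (g x i - c * |x i|)^2) B := by
    intro i
    apply ContinuousOn.pow
    exact ((hproj i).comp_continuousOn hg).sub
      ((continuous_const.mul ((continuous_abs).comp (hproj i))).continuousOn)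
  have hInt_i : ∀ i : Fin n, IntegrableOn
      (fun x : EuclideanSpace ℝ (Fin n) => (g x i - c * |x i|)^2) B volume :=
    fun i => (hFicont i).integrableOn_compact hBcompact
  have hIntSum : ∫ x in B, ‖g x - f x‖^2
      = ∑ i : Fin n, ∫ x in B, (g x i - c * |x i|)^2 := by
    rw [setIntegral_congr_fun hBmeas (g := fun x => ∑ i : Fin n, (g x i - c * |x i|)^2)
      (fun x _ => by
        rw [EuclideanSpace.norm_eq, Real.sq_sqrt (Finset.sum_nonneg fun i _ => by positivity)]
        refine Finset.sum_congr rfl fun i _ => ?_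
        rw [PiLp.sub_apply, hf, Real.norm_eq_abs, sq_abs])]
    exact integral_finset_sum Finset.univ (fun i _ => hInt_i i)
  -- per-coordinate lower bound
  have hcoord : ∀ i : Fin n,
      (2*η)^(n-1) * ((c - ω η)^2 * η^3/6) ≤ ∫ x in B, (g x i - c * |x i|)^2 := by
    intro i
    obtain ⟨m, rfl⟩ : ∃ m, n = m + 1 := ⟨n - 1, (Nat.succ_pred_eq_of_pos i.pos).symm⟩
    simp only [Nat.add_sub_cancel]
    set F : (Fin (m+1) → ℝ) → ℝ := fun y => (g (meq.symm y) i - c * |y i|)^2 with hF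
    have hmapsB : Set.MapsTo ⇑meq.symm cube B := by
      intro y hy
      rw [hBpre]
      simpa [MeasurableEquiv.apply_symm_apply] using hy
    have hFcont : ContinuousOn F cube := by
      apply ContinuousOn.pow
      exact (((hproj i).comp_continuousOn (hg.comp hsymm_cont.continuousOn hmapsB)).sub
        ((continuous_const.mul ((continuous_abs).comp (continuous_apply i))).continuousOn))
    have hline : ∀ y : Fin m → ℝ, (∀ j, y j ∈ Set.Icc (-η) η) →
        (c - ω η)^2 * η^3/6 ≤ ∫ t in (-η)..η, F (i.insertNth t y) := by
      intro y hy
      set z : EuclideanSpace ℝ (Fin (m+1)) := meq.symm (i.insertNth 0 y) with hz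
      have hmem : ∀ t : ℝ, |t| ≤ η → meq.symm (i.insertNth t y) ∈ B := by
        intro t ht
        rw [hBpre]
        simp only [Set.mem_preimage, MeasurableEquiv.apply_symm_apply, hcube, Set.mem_pi,
          Set.mem_univ, true_implies]
        intro j
        rcases eq_or_ne j i with rfl | hne
        · rw [Fin.insertNth_apply_same]
          exact Set.mem_Icc.mpr (abs_le.mp ht)
        · obtain ⟨k, rfl⟩ := Fin.exists_succAbove_eq hne
          rw [Fin.insertNth_apply_succAbove]
          exact hy k
      have hzB : z ∈ B := hmem 0 (by simpa using hη.le)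
      have hupd : ∀ t : ℝ, (meq.symm (i.insertNth t y)) = WithLp.toLp 2 (Function.update z i t) := by
        intro t
        ext j
        rcases eq_or_ne j i with rfl | hne
        · change _ = Function.update (WithLp.ofLp z) j t j
          rw [Function.update_self]
          exact Fin.insertNth_apply_same (α := fun _ => ℝ) j t y
        · change _ = Function.update (WithLp.ofLp z) i t j
          rw [Function.update_of_ne hne]
          obtain ⟨k, rfl⟩ := Fin.exists_succAbove_eq hne
          show Fin.insertNth (α := fun _ => ℝ) i t y (i.succAbove k)
            = Fin.insertNth (α := fun _ => ℝ) i 0 y (i.succAbove k)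
          rw [Fin.insertNth_apply_succAbove, Fin.insertNth_apply_succAbove]
      have hins_t : Continuous fun t : ℝ => (i.insertNth t y : Fin (m+1) → ℝ) := by
        apply continuous_pi
        intro j
        rcases eq_or_ne j i with rfl | hne
        · simpa only [Fin.insertNth_apply_same] using continuous_id'
        · obtain ⟨k, rfl⟩ := Fin.exists_succAbove_eq hne
          simpa only [Fin.insertNth_apply_succAbove] using continuous_const
      have hGcont : ContinuousOn (fun t => g (WithLp.toLp 2 (Function.update z i t)) i) (Set.Icc (-η) η) := by
        have heq : (fun t => g (WithLp.toLp 2 (Function.update z i t)) i)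
            = fun t => g (meq.symm (i.insertNth t y)) i := funext fun t => by rw [hupd]
        rw [heq]
        exact (hproj i).comp_continuousOn (hg.comp
          (hsymm_cont.comp hins_t).continuousOn
          (fun t ht => hmem t (abs_le.mpr (Set.mem_Icc.mp ht))))
      have hlb := wells_line_bound c η (ω η) hη hωη0 (by linarith)
        (fun t => g (WithLp.toLp 2 (Function.update z i t)) i) (fun t => pd i (WithLp.toLp 2 (Function.update z i t)))
        hGcont
        (fun t ht => hpd i z hzB t ht)
        (fun t ht => by
          have h0 : (0:ℝ) ∈ Set.Ioo (-η) η := by constructor <;> [linarith; exact hη]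
          have := hmod i z hzB t ht 0 h0
          rw [sub_zero] at this
          exact this.trans (hω_mono |t| η (abs_nonneg t)
            (le_of_lt (abs_lt.mpr ⟨ht.1, ht.2⟩))))
      have hFeq : ∀ t : ℝ, F (i.insertNth t y) = (g (WithLp.toLp 2 (Function.update z i t)) i - c * |t|)^2 := by
        intro t
        simp only [hF, hupd t, Fin.insertNth_apply_same]
      calc (c - ω η)^2 * η^3/6 ≤ ∫ t in (-η)..η, (g (WithLp.toLp 2 (Function.update z i t)) i - c * |t|)^2 := hlb
        _ = ∫ t in (-η)..η, F (i.insertNth t y) := by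
            apply intervalIntegral.integral_congr
            intro t _
            exact (hFeq t).symm
    have hcb := wells_coord_bound i η ((c - ω η)^2 * η^3/6) hη F hFcont hline
    have htrans : ∫ y in cube, F y = ∫ x in B, (g x i - c * |x i|)^2 := by
      have h2 := hMP.setIntegral_preimage_emb meq.measurableEmbedding F cube
      rw [← hBpre] at h2
      rw [← h2]
      apply setIntegral_congr_fun hBmeas
      intro x _
      simp only [hF, MeasurableEquiv.symm_apply_apply]
      rfl
    rw [← htrans]
    exact hcb
  -- key inequality (first part)
  have hkey : (1 / 12) * n * η ^ 2 * (c - 2 * ω η) ^ 2 ≤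
      (1 / (volume B).toReal) * ∫ x in B, ‖g x - f x‖ ^ 2 := by
    rcases Nat.eq_zero_or_pos n with rfl | hn
    · simp only [Nat.cast_zero, mul_zero, zero_mul]
      have h1 : (0:ℝ) ≤ ∫ x in B, ‖g x - f x‖ ^ 2 :=
        integral_nonneg fun x => by positivity
      have h2 : (0:ℝ) ≤ 1 / (volume B).toReal := by positivity
      positivity
    · have hsum : (n : ℝ) * ((2*η)^(n-1) * ((c - ω η)^2 * η^3/6))
          ≤ ∫ x in B, ‖g x - f x‖ ^ 2 := by
        rw [hIntSum]
        calc (n : ℝ) * ((2*η)^(n-1) * ((c - ω η)^2 * η^3/6))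
            = ∑ _i : Fin n, (2*η)^(n-1) * ((c - ω η)^2 * η^3/6) := by
              rw [Finset.sum_const, Finset.card_univ, Fintype.card_fin, nsmul_eq_mul]
          _ ≤ ∑ i : Fin n, ∫ x in B, (g x i - c * |x i|)^2 :=
              Finset.sum_le_sum fun i _ => hcoord i
      have h2η : (0:ℝ) < 2*η := by linarith
      have hpow : ((2:ℝ)*η)^n = (2*η)^(n-1) * (2*η) := by
        rw [← pow_succ, Nat.sub_add_cancel hn]
      have hVpos : (0:ℝ) < (2*η)^n := by positivity
      rw [hBvol]
      have hstep : (1 / (2*η)^n) * ((n : ℝ) * ((2*η)^(n-1) * ((c - ω η)^2 * η^3/6)))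
          ≤ (1 / (2*η)^n) * ∫ x in B, ‖g x - f x‖ ^ 2 := by
        apply mul_le_mul_of_nonneg_left hsum
        positivity
      refine le_trans ?_ hstep
      rw [hpow]
      have hppos : (0:ℝ) < (2*η)^(n-1) := by positivity
      have hsq : (c - 2 * ω η)^2 ≤ (c - ω η)^2 := by nlinarith
      have hn0 : (0:ℝ) ≤ (n:ℝ) := Nat.cast_nonneg n
      calc (1 / 12) * (n:ℝ) * η ^ 2 * (c - 2 * ω η) ^ 2
          = ((n:ℝ) * η^2/12) * (c - 2 * ω η)^2 := by ring
        _ ≤ ((n:ℝ) * η^2/12) * (c - ω η)^2 :=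
            mul_le_mul_of_nonneg_left hsq (by positivity)
        _ = (1 / ((2*η)^(n-1)*(2*η))) * ((n : ℝ) * ((2*η)^(n-1) * ((c - ω η)^2 * η^3/6))) := by
            field_simp
            ring
  refine ⟨hkey, ?_⟩
  -- second part
  have hfc : Continuous f := by
    have hfeq : f = fun x => (WithLp.equiv 2 (Fin n → ℝ)).symm (fun i => c * |x i|) :=
      funext fun x => PiLp.ext fun i => (hf x i).trans rfl
    rw [hfeq]
    exact (PiLp.continuous_toLp 2 _).comp
      (continuous_pi fun i => continuous_const.mul (continuous_abs.comp (hproj i)))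
  have hgf_cont : ContinuousOn (fun x => ‖g x - f x‖) B := (hg.sub hfc.continuousOn).norm
  have hbdd : BddAbove (Set.range fun x : B =>
      ‖g (x : EuclideanSpace ℝ (Fin n)) - f (x : EuclideanSpace ℝ (Fin n))‖) := by
    have hrange : (Set.range fun x : B =>
        ‖g (x : EuclideanSpace ℝ (Fin n)) - f (x : EuclideanSpace ℝ (Fin n))‖)
        = (fun x => ‖g x - f x‖) '' B := by
      rw [← Set.image_univ, ← Set.image_image (fun x => ‖g x - f x‖) Subtype.val,
        Set.image_univ, Subtype.range_coe]
    rw [hrange]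
    exact (hBcompact.image_of_continuousOn hgf_cont).bddAbove
  set M := ⨆ x : B, ‖g (x : EuclideanSpace ℝ (Fin n)) - f (x : EuclideanSpace ℝ (Fin n))‖ with hM
  have hle : ∀ x ∈ B, ‖g x - f x‖ ≤ M := fun x hx => le_ciSup hbdd (⟨x, hx⟩ : B)
  have hx0 : (0 : EuclideanSpace ℝ (Fin n)) ∈ B := by
    rw [hB]
    intro i
    simp [PiLp.zero_apply]
    exact hη.le
  have hM0 : 0 ≤ M := le_trans (norm_nonneg _) (hle 0 hx0)
  have hVpos : (0:ℝ) < (volume B).toReal := by rw [hBvol]; positivity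
  have hintle : ∫ x in B, ‖g x - f x‖ ^ 2 ≤ (volume B).toReal * M^2 := by
    have h1 : ∫ x in B, ‖g x - f x‖ ^ 2 ≤ ∫ _x in B, M^2 := by
      apply setIntegral_mono_on
      · exact ((hgf_cont.pow 2)).integrableOn_compact hBcompact
      · exact integrableOn_const hBcompact.measure_lt_top.ne
      · exact hBmeas
      · intro x hx
        exact pow_le_pow_left₀ (norm_nonneg _) (hle x hx) 2
    rwa [setIntegral_const, smul_eq_mul] at h1
  have hM2 : (1 / 12) * n * η ^ 2 * (c - 2 * ω η) ^ 2 ≤ M^2 := by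
    refine hkey.trans ?_
    rw [one_div]
    calc (volume B).toReal⁻¹ * ∫ x in B, ‖g x - f x‖ ^ 2
        ≤ (volume B).toReal⁻¹ * ((volume B).toReal * M^2) :=
          mul_le_mul_of_nonneg_left hintle (by positivity)
      _ = M^2 := by field_simp
  have hL0 : 0 ≤ Real.sqrt 3 / 6 * Real.sqrt n * η * (c - 2 * ω η) := by
    have := Real.sqrt_nonneg 3
    have := Real.sqrt_nonneg (n:ℝ)
    positivity
  have hL2 : (Real.sqrt 3 / 6 * Real.sqrt n * η * (c - 2 * ω η))^2
      = (1 / 12) * n * η ^ 2 * (c - 2 * ω η) ^ 2 := by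
    have h3 : Real.sqrt 3 ^ 2 = 3 := Real.sq_sqrt (by norm_num)
    have hn : Real.sqrt (n:ℝ) ^ 2 = (n:ℝ) := Real.sq_sqrt (Nat.cast_nonneg n)
    rw [mul_pow, mul_pow, mul_pow, div_pow, h3, hn]
    norm_num
  calc Real.sqrt 3 / 6 * Real.sqrt n * η * (c - 2 * ω η)
      = Real.sqrt ((Real.sqrt 3 / 6 * Real.sqrt n * η * (c - 2 * ω η))^2) :=
        (Real.sqrt_sq hL0).symm
    _ = Real.sqrt ((1 / 12) * n * η ^ 2 * (c - 2 * ω η) ^ 2) := by rw [hL2]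
    _ ≤ Real.sqrt (M^2) := Real.sqrt_le_sqrt hM2
    _ = M := Real.sqrt_sq hM0
end

section
/- Let X be a real vector space with norm, e ∈ X with ‖e‖=1, φ ∈ X* with ‖φ‖=1 and φ(e)=1, Y = ker φ. Let A, C ⊆ B_Y (the closed unit ball of Y) with dist(A,C) ≥ d for some d ∈ (0,1). Define Ã_∞ = ∪_{t≥0} t(e+A) and C̃_∞ = ∪_{t≥0} t(e+C). Then dist(e+A, C̃_∞) ≥ d/3. -/
/-- Cone separation estimate: if `A, C` lie in the unit ball of `Y = ker φ` with
`dist(A,C) ≥ d`, then `dist(e + A, C̃_∞) ≥ d/3` where `C̃_∞ = ∪_{t≥0} t(e+C)`. -/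
theorem stmt_11 {X : Type*} [NormedAddCommGroup X] [NormedSpace ℝ X]
    (e : X) (he : ‖e‖ = 1) (φ : X →L[ℝ] ℝ) (hφ : ‖φ‖ = 1) (hφe : φ e = 1)
    (A C : Set X)
    (hA : A ⊆ {y : X | φ y = 0 ∧ ‖y‖ ≤ 1}) (hC : C ⊆ {y : X | φ y = 0 ∧ ‖y‖ ≤ 1})
    (d : ℝ) (hd0 : 0 < d) (hd1 : d < 1)
    (hdist : ∀ a ∈ A, ∀ c ∈ C, d ≤ ‖a - c‖) :
    ∀ a ∈ A, ∀ t : ℝ, 0 ≤ t → ∀ c ∈ C, d / 3 ≤ ‖(e + a) - t • (e + c)‖ := by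
  intro a ha t ht c hc
  obtain ⟨hφa, hna⟩ := hA ha
  obtain ⟨hφc, hnc⟩ := hC hc
  set x := (e + a) - t • (e + c) with hx
  have hφx : φ x = 1 - t := by
    simp [hx, hφe, hφa, hφc, mul_comm]
  by_cases h : d / 3 ≤ |1 - t|
  · have h1 := φ.le_opNorm x
    rw [hφ, one_mul] at h1
    have h2 : |1 - t| ≤ ‖x‖ := by rwa [hφx] at h1
    linarith
  · push_neg at h
    have hx2 : x = (a - c) + ((1 - t) • e + (1 - t) • c) := by
      simp only [hx, sub_smul, one_smul, smul_add]
      abel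
    have h1 : ‖(1 - t) • e‖ = |1 - t| := by
      rw [norm_smul, he, Real.norm_eq_abs, mul_one]
    have h2 : ‖(1 - t) • c‖ ≤ |1 - t| := by
      rw [norm_smul, Real.norm_eq_abs]
      nlinarith [abs_nonneg (1 - t), norm_nonneg c]
    have h3 : d ≤ ‖a - c‖ := hdist a ha c hc
    have h4 : ‖(1 - t) • e + (1 - t) • c‖ ≤ |1 - t| + |1 - t| := by
      calc ‖(1 - t) • e + (1 - t) • c‖ ≤ ‖(1 - t) • e‖ + ‖(1 - t) • c‖ := norm_add_le _ _
        _ ≤ |1 - t| + |1 - t| := by rw [h1]; linarith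
    have h5 : ‖a - c‖ - ‖(1 - t) • e + (1 - t) • c‖ ≤ ‖x‖ := by
      rw [hx2]
      have := norm_add_le (a - c + ((1 - t) • e + (1 - t) • c)) (-((1 - t) • e + (1 - t) • c))
      simp only [add_neg_cancel_right, norm_neg] at this
      linarith
    linarith
end

section
/- Let X = ℓ₂ (infinite-dimensional separable Hilbert space with orthonormal basis (e_i)), A = {x ∈ B_X : x_j ≤ 0 for all j}, C = {x ∈ S_X : x_j ≥ 0 for all j}. Then dist(A,C) = 1, yet for every z ∈ X, r > 0 with A ⊆ B(z,r) and every ε > 0, the ball B(z,r+ε) intersects C. -/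
local notation "X" => lp (fun _ : ℕ => ℝ) 2

private noncomputable def eVec (i : ℕ) : lp (fun _ : ℕ => ℝ) 2 := lp.single 2 i (1 : ℝ)

private lemma eVec_norm (i : ℕ) : ‖eVec i‖ = 1 := by
  have := lp.norm_single (p := 2) (E := fun _ : ℕ => ℝ) (by norm_num) i (1 : ℝ)
  simpa [eVec] using this

private lemma eVec_apply (i j : ℕ) : (eVec i : ∀ _, ℝ) j = if j = i then 1 else 0 := by
  rw [eVec, lp.single_apply]
  split_ifs with h <;> simp [h]

private lemma eVec_nonneg (i j : ℕ) : 0 ≤ (eVec i : ∀ _, ℝ) j := by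
  rw [eVec_apply]; split_ifs <;> norm_num

private lemma inner_eVec (i : ℕ) (z : lp (fun _ : ℕ => ℝ) 2) :
    (inner ℝ (eVec i) z : ℝ) = z i := by
  have := lp.inner_single_left (𝕜 := ℝ) (G := fun _ : ℕ => ℝ) i (1 : ℝ) z
  simpa [eVec, RCLike.inner_apply] using this

/-- In `ℓ₂`, with `A` the negative part of the unit ball and `C` the positive part of the unit
sphere, `dist(A,C) = 1`, yet every closed ball containing `A` meets `C` after arbitrarily small
enlargement of its radius. -/
theorem stmt_16
    (A C : Set (lp (fun _ : ℕ => ℝ) 2))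
    (hA : A = {x : lp (fun _ : ℕ => ℝ) 2 | ‖x‖ ≤ 1 ∧ ∀ j, x j ≤ 0})
    (hC : C = {x : lp (fun _ : ℕ => ℝ) 2 | ‖x‖ = 1 ∧ ∀ j, 0 ≤ x j}) :
    sInf (Set.image2 dist A C) = 1 ∧
      ∀ (z : lp (fun _ : ℕ => ℝ) 2) (r : ℝ), 0 < r → A ⊆ Metric.closedBall z r →
        ∀ ε > 0, ∃ y ∈ C, y ∈ Metric.closedBall z (r + ε) := by
  have h0A : (0 : X) ∈ A := by
    rw [hA]; constructor
    · simp
    · intro j; simp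
  have heC : ∀ i, eVec i ∈ C := by
    intro i
    rw [hC]; exact ⟨eVec_norm i, eVec_nonneg i⟩
  have hlow : ∀ d ∈ Set.image2 dist A C, (1 : ℝ) ≤ d := by
    rintro d ⟨a, ha, c, hc, rfl⟩
    rw [hA] at ha; rw [hC] at hc
    obtain ⟨ha1, ha2⟩ := ha
    obtain ⟨hc1, hc2⟩ := hc
    have hinner : (inner ℝ a c : ℝ) ≤ 0 := by
      rw [lp.inner_eq_tsum]
      refine tsum_nonpos fun j => ?_
      have : (inner ℝ (a j) (c j) : ℝ) = a j * c j := by simp [RCLike.inner_apply, mul_comm]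
      rw [this]
      exact mul_nonpos_of_nonpos_of_nonneg (ha2 j) (hc2 j)
    have hsq : ‖a - c‖ ^ 2 = ‖a‖ ^ 2 - 2 * (inner ℝ a c : ℝ) + ‖c‖ ^ 2 :=
      norm_sub_sq_real a c
    have h1 : (1 : ℝ) ≤ ‖a - c‖ ^ 2 := by
      rw [hsq, hc1]
      nlinarith [sq_nonneg ‖a‖]
    rw [dist_eq_norm]
    nlinarith [norm_nonneg (a - c)]
  constructor
  · refine le_antisymm ?_ (le_csInf ⟨_, Set.mem_image2_of_mem h0A (heC 0)⟩ hlow)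
    have hmem : dist (0 : X) (eVec 0) ∈ Set.image2 dist A C :=
      Set.mem_image2_of_mem h0A (heC 0)
    have : dist (0 : X) (eVec 0) = 1 := by
      rw [dist_eq_norm, zero_sub, norm_neg, eVec_norm]
    exact this ▸ csInf_le ⟨1, hlow⟩ hmem
  · intro z r hr hsub ε hε
    -- find a coordinate with |z i| small
    have hsum : Summable (fun i => ‖z i‖ ^ (2 : ENNReal).toReal) :=
      (lp.memℓp z).summable (by norm_num)
    have htend := hsum.tendsto_atTop_zero
    have hpos : (0 : ℝ) < (r * ε / 2) ^ 2 := by positivity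
    obtain ⟨i, hi⟩ := (htend.eventually (gt_mem_nhds hpos)).exists
    have hzi : |z i| ≤ r * ε / 2 := by
      have h2 : ‖z i‖ ^ (2 : ℝ) < (r * ε / 2) ^ 2 := hi
      have h2' : |z i| ^ 2 < (r * ε / 2) ^ 2 := by
        rw [← Real.norm_eq_abs]
        calc ‖z i‖ ^ 2 = ‖z i‖ ^ (2 : ℝ) := by
              rw [← Real.rpow_natCast ‖z i‖ 2]; norm_num
          _ < _ := h2
      nlinarith [abs_nonneg (z i), mul_pos hr hε]
    have hnegA : (-(eVec i)) ∈ A := by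
      rw [hA]
      constructor
      · rw [norm_neg, eVec_norm]
      · intro j
        have : (-(eVec i) : ∀ _, ℝ) j = -((eVec i : ∀ _, ℝ) j) := by
          simp
        rw [this]
        simpa using eVec_nonneg i j
    have hball := hsub hnegA
    rw [Metric.mem_closedBall, dist_eq_norm] at hball
    have hsq1 : ‖-(eVec i) - z‖ ^ 2 = 1 + 2 * z i + ‖z‖ ^ 2 := by
      have : ‖-(eVec i) - z‖ = ‖eVec i + z‖ := by
        rw [show -(eVec i) - z = -(eVec i + z) by abel, norm_neg]
      rw [this, norm_add_sq_real, eVec_norm, inner_eVec]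
      ring
    refine ⟨eVec i, heC i, ?_⟩
    rw [Metric.mem_closedBall, dist_eq_norm]
    have hsq2 : ‖eVec i - z‖ ^ 2 = 1 - 2 * z i + ‖z‖ ^ 2 := by
      rw [norm_sub_sq_real, eVec_norm, inner_eVec]; ring
    have hb : ‖-(eVec i) - z‖ ^ 2 ≤ r ^ 2 := by
      nlinarith [norm_nonneg (-(eVec i) - z)]
    have habs := abs_le.mp hzi
    nlinarith [norm_nonneg (eVec i - z), sq_nonneg (r + ε)]
end

section
/- Let X = c₀ with canonical basis (e_l), A = {0} ∪ { 2^{−n} e_l : n,l ∈ ℕ }, and f : A → ℝ defined by f(0) = 0 and f(2^{−n} e_l) = 2^{−3n}. Then A is closed in c₀ and for all x, y ∈ A one has |f(y) − f(x)| ≤ 8·‖y−x‖³. -/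
open scoped ZeroAtInfty

namespace Stmt18Aux

lemma abs_apply_le_norm (g : C₀(ℕ, ℝ)) (j : ℕ) : |g j| ≤ ‖g‖ := by
  rw [← ZeroAtInftyContinuousMap.norm_toBCF_eq_norm]
  exact g.toBCF.norm_coe_le_norm j

lemma norm_le_of (g : C₀(ℕ, ℝ)) (C : ℝ) (hC : 0 ≤ C) (h : ∀ j, |g j| ≤ C) : ‖g‖ ≤ C := by
  rw [← ZeroAtInftyContinuousMap.norm_toBCF_eq_norm]
  exact (BoundedContinuousFunction.norm_le hC).2 h

section WithE
variable {e : ℕ → C₀(ℕ, ℝ)} (he : ∀ l j : ℕ, e l j = if j = l then (1 : ℝ) else 0)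

include he

lemma aux_apply (c : ℝ) (l j : ℕ) : (c • e l) j = if j = l then c else 0 := by
  simp [he]

lemma aux_norm (n l : ℕ) : ‖((2 : ℝ) ^ n)⁻¹ • e l‖ = ((2 : ℝ) ^ n)⁻¹ := by
  have hpos : (0 : ℝ) < ((2 : ℝ) ^ n)⁻¹ := by positivity
  apply le_antisymm
  · apply norm_le_of _ _ hpos.le
    intro j
    rw [aux_apply he]
    split
    · simp [abs_of_pos hpos]
    · simpa using hpos.le
  · have := abs_apply_le_norm (((2 : ℝ) ^ n)⁻¹ • e l) l
    rwa [aux_apply he, if_pos rfl, abs_of_pos hpos] at this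

lemma aux_sep {n m : ℕ} (l q : ℕ) (hnm : n ≤ m)
    (hne : ((2 : ℝ) ^ n)⁻¹ • e l ≠ ((2 : ℝ) ^ m)⁻¹ • e q) :
    ((2 : ℝ) ^ n)⁻¹ / 2 ≤ ‖((2 : ℝ) ^ n)⁻¹ • e l - ((2 : ℝ) ^ m)⁻¹ • e q‖ := by
  set a : ℝ := ((2 : ℝ) ^ n)⁻¹ with ha
  set b : ℝ := ((2 : ℝ) ^ m)⁻¹ with hb
  have key := abs_apply_le_norm (a • e l - b • e q) l
  have hval : (a • e l - b • e q) l = a - (if l = q then b else 0) := by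
    have : (a • e l - b • e q) l = (a • e l) l - (b • e q) l := by simp
    rw [this, aux_apply he, aux_apply he, if_pos rfl]
  rw [hval] at key
  refine le_trans ?_ key
  by_cases hlq : l = q
  · rw [if_pos hlq] at key ⊢
    have hnm' : n < m := by
      rcases lt_or_eq_of_le hnm with h | h
      · exact h
      · exact absurd (by rw [ha, hb, h, hlq]) hne
    have hble : b ≤ a / 2 := by
      rw [ha, hb]
      rw [show (2 : ℝ) ^ n = (2 : ℝ) ^ n * 1 by ring]
      have : ((2 : ℝ) ^ m)⁻¹ ≤ ((2 : ℝ) ^ (n + 1))⁻¹ := by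
        apply inv_anti₀ (by positivity)
        exact pow_le_pow_right₀ (by norm_num) hnm'
      calc ((2 : ℝ) ^ m)⁻¹ ≤ ((2 : ℝ) ^ (n + 1))⁻¹ := this
        _ = ((2 : ℝ) ^ n * 1)⁻¹ / 2 := by rw [pow_succ]; field_simp
    have hbpos : (0 : ℝ) < b := by rw [hb]; positivity
    have : a / 2 ≤ a - b := by linarith
    refine le_trans this ?_
    exact le_abs_self _
  · rw [if_neg hlq, sub_zero]
    have hapos : (0 : ℝ) < a := by rw [ha]; positivity
    calc a / 2 ≤ a := by linarith
      _ ≤ |a| := le_abs_self _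

end WithE

end Stmt18Aux

/-- In `c₀`, the set `A = {0} ∪ {2^{−n} e_l}` is closed and the function `f(0) = 0`,
`f(2^{−n} e_l) = 2^{−3n}` satisfies `|f(y) − f(x)| ≤ 8 ‖y − x‖³` on `A`. -/
theorem stmt_18
    (e : ℕ → C₀(ℕ, ℝ)) (he : ∀ l j : ℕ, e l j = if j = l then (1 : ℝ) else 0)
    (A : Set C₀(ℕ, ℝ))
    (hA : A = {0} ∪ {x : C₀(ℕ, ℝ) | ∃ n : ℕ, 1 ≤ n ∧ ∃ l : ℕ, x = ((2 : ℝ) ^ n)⁻¹ • e l})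
    (f : C₀(ℕ, ℝ) → ℝ) (hf0 : f 0 = 0)
    (hfe : ∀ n : ℕ, 1 ≤ n → ∀ l : ℕ, f (((2 : ℝ) ^ n)⁻¹ • e l) = (((2 : ℝ) ^ n)⁻¹) ^ 3) :
    IsClosed A ∧ ∀ x ∈ A, ∀ y ∈ A, |f y - f x| ≤ 8 * ‖y - x‖ ^ 3 := by
  open Stmt18Aux in
  -- general separation: two distinct nonzero points of A are far apart
  have hsep : ∀ n m l q : ℕ, ((2 : ℝ) ^ n)⁻¹ • e l ≠ ((2 : ℝ) ^ m)⁻¹ • e q →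
      max ((2 : ℝ) ^ n)⁻¹ ((2 : ℝ) ^ m)⁻¹ / 2 ≤
        ‖((2 : ℝ) ^ n)⁻¹ • e l - ((2 : ℝ) ^ m)⁻¹ • e q‖ := by
    intro n m l q hne
    rcases le_total n m with h | h
    · have hmax : max ((2 : ℝ) ^ n)⁻¹ ((2 : ℝ) ^ m)⁻¹ = ((2 : ℝ) ^ n)⁻¹ := by
        apply max_eq_left
        apply inv_anti₀ (by positivity)
        exact pow_le_pow_right₀ (by norm_num) h
      rw [hmax]
      exact aux_sep he l q h hne
    · have hmax : max ((2 : ℝ) ^ n)⁻¹ ((2 : ℝ) ^ m)⁻¹ = ((2 : ℝ) ^ m)⁻¹ := by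
        apply max_eq_right
        apply inv_anti₀ (by positivity)
        exact pow_le_pow_right₀ (by norm_num) h
      rw [hmax, norm_sub_rev]
      exact aux_sep he q l h (Ne.symm hne)
  constructor
  · -- closedness via sequences
    apply IsSeqClosed.isClosed
    intro u x hu hux
    by_cases hx0 : x = 0
    · rw [hA]; left; exact hx0
    · have hxn : (0 : ℝ) < ‖x‖ := norm_pos_iff.mpr hx0
      -- eventually norms are large
      have hnormt : Filter.Tendsto (fun k => ‖u k‖) Filter.atTop (nhds ‖x‖) :=
        (continuous_norm.tendsto x).comp hux
      have hev : ∀ᶠ k in Filter.atTop, ‖x‖ / 2 < ‖u k‖ :=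
        hnormt.eventually (eventually_gt_nhds (by linarith))
      have hcauchy : CauchySeq u := hux.cauchySeq
      rw [Metric.cauchySeq_iff] at hcauchy
      obtain ⟨N1, hN1⟩ := hcauchy (‖x‖ / 4) (by linarith)
      obtain ⟨N2, hN2⟩ := hev.exists_forall_of_atTop
      set N := max N1 N2 with hN
      -- claim: u is constant from N on
      have hconst : ∀ k, N ≤ k → u k = u N := by
        intro k hk
        by_contra hne
        have h1 : ‖x‖ / 2 < ‖u k‖ := hN2 k (le_trans (le_max_right _ _) hk)
        have h2 : ‖x‖ / 2 < ‖u N‖ := hN2 N (le_max_right _ _)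
        obtain hk' := hu k
        obtain hN' := hu N
        rw [hA] at hk' hN'
        rcases hk' with hk' | ⟨n, hn1, l, hl⟩
        · simp only [Set.mem_singleton_iff] at hk'
          rw [hk', norm_zero] at h1; linarith
        rcases hN' with hN' | ⟨m, hm1, q, hq⟩
        · simp only [Set.mem_singleton_iff] at hN'
          rw [hN', norm_zero] at h2; linarith
        have hsepk := hsep n m l q (by
          intro hcontra; apply hne; rw [hl, hq, hcontra])
        have hnk : ‖u k‖ = ((2 : ℝ) ^ n)⁻¹ := by rw [hl, aux_norm he]
        have hnN : ‖u N‖ = ((2 : ℝ) ^ m)⁻¹ := by rw [hq, aux_norm he]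
        have hmaxge : ‖x‖ / 2 < max ((2 : ℝ) ^ n)⁻¹ ((2 : ℝ) ^ m)⁻¹ := by
          rw [← hnk]; exact lt_of_lt_of_le h1 (le_max_left _ _)
        have hdist := hN1 k (le_trans (le_max_left _ _) hk) N (le_max_left _ _)
        rw [dist_eq_norm, hl, hq] at hdist
        linarith [hsepk]
      have : x = u N := by
        have h1 : Filter.Tendsto (fun _ : ℕ => u N) Filter.atTop (nhds x) := by
          apply hux.congr'
          filter_upwards [Filter.eventually_ge_atTop N] with k hk
          exact hconst k hk
        exact tendsto_nhds_unique h1 tendsto_const_nhds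
      have huN := hu N
      rw [hA] at huN
      rw [hA, this]
      exact huN
  · -- the Hölder-type estimate
    -- helper for the nonzero-nonzero case with n ≤ m
    have hkey : ∀ n m : ℕ, 1 ≤ n → 1 ≤ m → n ≤ m → ∀ l q : ℕ,
        |f (((2 : ℝ) ^ n)⁻¹ • e l) - f (((2 : ℝ) ^ m)⁻¹ • e q)| ≤
          8 * ‖((2 : ℝ) ^ n)⁻¹ • e l - ((2 : ℝ) ^ m)⁻¹ • e q‖ ^ 3 := by
      intro n m hn1 hm1 hnm l q
      by_cases hne : ((2 : ℝ) ^ n)⁻¹ • e l = ((2 : ℝ) ^ m)⁻¹ • e q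
      · rw [hne]; simp only [sub_self, norm_zero, abs_zero]; positivity
      · rw [hfe n hn1 l, hfe m hm1 q]
        have hsep' := aux_sep he l q hnm hne
        set a : ℝ := ((2 : ℝ) ^ n)⁻¹ with ha
        set b : ℝ := ((2 : ℝ) ^ m)⁻¹ with hb
        have hapos : (0 : ℝ) < a := by rw [ha]; positivity
        have hbpos : (0 : ℝ) < b := by rw [hb]; positivity
        have hba : b ≤ a := by
          rw [ha, hb]
          apply inv_anti₀ (by positivity)
          exact pow_le_pow_right₀ (by norm_num) hnm
        have hb3 : b ^ 3 ≤ a ^ 3 := pow_le_pow_left₀ hbpos.le hba 3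
        have hb3pos : (0 : ℝ) < b ^ 3 := by positivity
        have h1 : |a ^ 3 - b ^ 3| ≤ a ^ 3 := by
          rw [abs_of_nonneg (by linarith)]
          linarith
        have h2 : a ^ 3 = 8 * (a / 2) ^ 3 := by ring
        have h3 : (a / 2) ^ 3 ≤ ‖a • e l - b • e q‖ ^ 3 := by
          apply pow_le_pow_left₀ (by linarith) hsep'
        linarith
    intro x hx y hy
    rw [hA] at hx hy
    rcases hx with hx | ⟨m, hm1, q, hq⟩ <;> rcases hy with hy | ⟨n, hn1, l, hl⟩
    · simp only [Set.mem_singleton_iff] at hx hy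
      rw [hx, hy, hf0]; simp
    · simp only [Set.mem_singleton_iff] at hx
      simp only [hx, hf0, hl, hfe n hn1 l, sub_zero, aux_norm he]
      rw [abs_of_nonneg (by positivity)]
      nlinarith [pow_pos (inv_pos.mpr (pow_pos (by norm_num : (0:ℝ) < 2) n)) 3]
    · simp only [Set.mem_singleton_iff] at hy
      simp only [hy, hf0, hq, hfe m hm1 q, zero_sub, abs_neg, norm_neg, aux_norm he]
      rw [abs_of_nonneg (by positivity)]
      nlinarith [pow_pos (inv_pos.mpr (pow_pos (by norm_num : (0:ℝ) < 2) m)) 3]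
    · rw [hl, hq]
      rcases le_total n m with h | h
      · exact hkey n m hn1 hm1 h l q
      · rw [abs_sub_comm, norm_sub_rev]
        exact hkey m n hm1 hn1 h q l
end
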